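/- arXiv:math/9801026 — 3 statements merged into one kernel-verified Lean document; each statement's English description precedes it below -/
import Mathlib

section
/- The ordered-roots map is continuous: on the set of monic real polynomials of degree n with all roots real, the functions P ↦ x₁(P) ≤ x₂(P) ≤ … ≤ xₙ(P) assigning the increasingly ordered real roots are continuous in the coefficients of P. -/
open Polynomial Filter Topology

/-- The monic real polynomial of degree `n` with lower-order coefficient
vector `a : Fin n → ℝ`. -/
noncomputable def mkMonic (n : ℕ) (a : Fin n → ℝ) : Polynomial ℝ :=
  X ^ n + ∑ i : Fin n, C (a i) * X ^ (i : ℕ)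

namespace OrderedRootsAux

variable {n : ℕ}

/-- The coefficient map from roots to lower-order coefficients. -/
noncomputable def phi (n : ℕ) (x : Fin n → ℝ) : Fin n → ℝ :=
  fun i => (∏ j, (X - C (x j))).coeff i

lemma monic_P (x : Fin n → ℝ) : (∏ j, (X - C (x j))).Monic :=
  monic_prod_of_monic _ _ fun _ _ => monic_X_sub_C _

lemma natDegree_P (x : Fin n → ℝ) : (∏ j, (X - C (x j))).natDegree = n := by
  rw [natDegree_prod_of_monic _ _ fun _ _ => monic_X_sub_C _]
  simp

lemma mkMonic_coeff (a : Fin n → ℝ) (k : ℕ) :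
    (mkMonic n a).coeff k =
      (if k = n then 1 else 0) + (if h : k < n then a ⟨k, h⟩ else 0) := by
  rw [mkMonic, coeff_add, coeff_X_pow, finset_sum_coeff]
  congr 1
  simp_rw [coeff_C_mul, coeff_X_pow]
  split
  · next h =>
    rw [Finset.sum_eq_single (⟨k, h⟩ : Fin n)]
    · simp
    · intro i _ hne
      rw [if_neg, mul_zero]
      intro hk
      exact hne (Fin.ext hk.symm)
    · simp
  · next h =>
    apply Finset.sum_eq_zero
    intro i _
    rw [if_neg, mul_zero]
    intro hk
    exact h (hk ▸ i.2)

lemma mkMonic_phi (x : Fin n → ℝ) : mkMonic n (phi n x) = ∏ j, (X - C (x j)) := by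
  ext k
  rw [mkMonic_coeff]
  rcases lt_trichotomy k n with h | h | h
  · rw [if_neg h.ne, dif_pos h, zero_add]; rfl
  · subst h
    rw [if_pos rfl, dif_neg (lt_irrefl _), add_zero]
    have := (monic_P x).coeff_natDegree
    rw [natDegree_P] at this
    exact this.symm
  · rw [if_neg h.ne', dif_neg (not_lt.2 h.le), add_zero]
    exact (coeff_eq_zero_of_natDegree_lt (by rw [natDegree_P]; exact h)).symm

lemma eq_phi {a x : Fin n → ℝ} (h : mkMonic n a = ∏ j, (X - C (x j))) : a = phi n x := by
  funext i
  have h2 := congrArg (fun p => p.coeff (i : ℕ)) h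
  simp only [mkMonic_coeff] at h2
  rw [if_neg (Nat.ne_of_lt i.2), dif_pos i.2, zero_add] at h2
  simpa [phi] using h2

lemma prod_eq (x : Fin n → ℝ) :
    (∏ j, (X - C (x j))) = ((Finset.univ.val.map x).map fun r => X - C r).prod := by
  rw [Multiset.map_map]
  rfl

lemma phi_injOn (x y : Fin n → ℝ) (hx : Monotone x) (hy : Monotone y)
    (h : phi n x = phi n y) : x = y := by
  have hp : (∏ j, (X - C (x j))) = ∏ j, (X - C (y j)) := by
    rw [← mkMonic_phi x, ← mkMonic_phi y, h]
  have hr : Finset.univ.val.map x = Finset.univ.val.map y := by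
    have h2 := congrArg Polynomial.roots hp
    rwa [prod_eq, prod_eq, Polynomial.roots_multiset_prod_X_sub_C,
      Polynomial.roots_multiset_prod_X_sub_C] at h2
  have huniv : ∀ z : Fin n → ℝ, Finset.univ.val.map z = ((List.ofFn z : List ℝ) : Multiset ℝ) := by
    intro z
    rw [List.ofFn_eq_map]
    rfl
  rw [huniv, huniv] at hr
  have hperm : (List.ofFn x).Perm (List.ofFn y) := Multiset.coe_eq_coe.mp hr
  exact List.ofFn_injective (hperm.eq_of_sortedLE hx.sortedLE_ofFn hy.sortedLE_ofFn)

lemma root_bound (x : Fin n → ℝ) (i : Fin n) :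
    |x i| ≤ max 1 (∑ j, |phi n x j|) := by
  set a := phi n x with ha
  have heval : (x i) ^ n + ∑ j : Fin n, a j * (x i) ^ (j : ℕ) = 0 := by
    have h1 : eval (x i) (mkMonic n a) = 0 := by
      rw [ha, mkMonic_phi, eval_prod]
      exact Finset.prod_eq_zero (Finset.mem_univ i) (by simp)
    simpa [mkMonic, eval_finset_sum] using h1
  rcases le_or_gt |x i| 1 with h | h
  · exact h.trans (le_max_left _ _)
  · refine le_max_of_le_right ?_
    have ht : (x i) ^ n = -∑ j, a j * (x i) ^ (j : ℕ) := by linarith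
    have habs : |x i| ^ n ≤ (∑ j, |a j|) * |x i| ^ (n - 1) := by
      rw [Finset.sum_mul]
      calc |x i| ^ n = |(x i) ^ n| := (abs_pow _ _).symm
        _ = |∑ j, a j * (x i) ^ (j : ℕ)| := by rw [ht, abs_neg]
        _ ≤ ∑ j, |a j * (x i) ^ (j : ℕ)| := Finset.abs_sum_le_sum_abs _ _
        _ ≤ ∑ j, |a j| * |x i| ^ (n - 1) := by
            apply Finset.sum_le_sum
            intro j _
            rw [abs_mul, abs_pow]
            exact mul_le_mul_of_nonneg_left
              (pow_le_pow_right₀ h.le (Nat.le_pred_of_lt j.2)) (abs_nonneg _)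
    have hpow : |x i| ^ n = |x i| * |x i| ^ (n - 1) := by
      rw [← pow_succ']
      congr 1
      have := i.pos
      omega
    rw [hpow] at habs
    have hpos : (0 : ℝ) < |x i| ^ (n - 1) := pow_pos (lt_trans one_pos h) _
    exact le_of_mul_le_mul_right habs hpos

lemma continuous_phi : Continuous (phi n) := by
  apply continuous_pi
  intro i
  have key : ∀ x : Fin n → ℝ, phi n x i =
      (-1 : ℝ) ^ (n - (i : ℕ)) *
        ∑ t ∈ Finset.univ.powersetCard (n - (i : ℕ)), ∏ j ∈ t, x j := by
    intro x
    have hcard : Multiset.card (Finset.univ.val.map x) = n := by simp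
    have h1 := Multiset.prod_X_sub_C_coeff (Finset.univ.val.map x)
      (k := (i : ℕ)) (by rw [hcard]; exact i.2.le)
    rw [hcard, Finset.esymm_map_val] at h1
    rw [phi, prod_eq, h1]
  simp only [key]
  exact continuous_const.mul (continuous_finset_sum _ fun t _ =>
    continuous_finset_prod _ fun j _ => continuous_apply j)

lemma isClosedMap_phi : IsClosedMap (phi n) := by
  intro D hD
  apply IsSeqClosed.isClosed
  intro u a hu hua
  choose v hvD hv using hu
  obtain ⟨R, hR⟩ : ∃ R : ℝ, ∀ k, ‖u k‖ ≤ R := by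
    obtain ⟨R, hR⟩ := hua.cauchySeq.isBounded_range.subset_closedBall 0
    exact ⟨R, fun k => by
      simpa [Metric.mem_closedBall, dist_zero_right] using hR (Set.mem_range_self k)⟩
  set B := max 1 ((n : ℝ) * R) with hB
  have hvB : ∀ k, v k ∈ Metric.closedBall (0 : Fin n → ℝ) B := by
    intro k
    rw [Metric.mem_closedBall, dist_zero_right]
    refine (pi_norm_le_iff_of_nonneg (le_trans zero_le_one (le_max_left _ _))).mpr ?_
    intro i
    rw [Real.norm_eq_abs]
    refine (root_bound (v k) i).trans (max_le_max le_rfl ?_)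
    calc ∑ j, |phi n (v k) j| ≤ ∑ _j : Fin n, R := by
          apply Finset.sum_le_sum
          intro j _
          rw [hv k]
          exact (Real.norm_eq_abs _ ▸ norm_le_pi_norm (u k) j).trans (hR k)
      _ = (n : ℝ) * R := by simp [mul_comm]
  obtain ⟨y, -, ψ, hψ, hvy⟩ :=
    tendsto_subseq_of_bounded Metric.isBounded_closedBall hvB
  have hyD : y ∈ D := hD.isSeqClosed (fun k => hvD (ψ k)) hvy
  refine ⟨y, hyD, ?_⟩
  have h1 : Filter.Tendsto (fun k => phi n (v (ψ k))) Filter.atTop (𝓝 (phi n y)) :=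
    (continuous_phi.tendsto y).comp hvy
  have h2 : Filter.Tendsto (fun k => u (ψ k)) Filter.atTop (𝓝 a) :=
    hua.comp hψ.tendsto_atTop
  simp only [hv] at h1
  exact tendsto_nhds_unique h1 h2

end OrderedRootsAux

open OrderedRootsAux in
/-- Lemma 4.1: on the set of (coefficient vectors of) monic real polynomials of
degree `n` splitting over `ℝ`, the increasingly ordered roots can be chosen, and
each of them depends continuously on the coefficients. -/
theorem ordered_roots_continuous (n : ℕ) :
    ∃ ξ : (Fin n → ℝ) → Fin n → ℝ,
      (∀ a ∈ {a : Fin n → ℝ | ∃ x : Fin n → ℝ, mkMonic n a = ∏ i, (X - C (x i))},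
        mkMonic n a = ∏ i, (X - C (ξ a i))) ∧
      (∀ a ∈ {a : Fin n → ℝ | ∃ x : Fin n → ℝ, mkMonic n a = ∏ i, (X - C (x i))},
        Monotone (ξ a)) ∧
      ∀ i : Fin n, ContinuousOn (fun a => ξ a i)
        {a : Fin n → ℝ | ∃ x : Fin n → ℝ, mkMonic n a = ∏ i, (X - C (x i))} := by
  classical
  set S := {a : Fin n → ℝ | ∃ x : Fin n → ℝ, mkMonic n a = ∏ i, (X - C (x i))} with hSdef
  have hsel : ∀ a ∈ S, ∃ x : Fin n → ℝ, Monotone x ∧ mkMonic n a = ∏ i, (X - C (x i)) := by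
    rintro a ⟨x, hx⟩
    refine ⟨x ∘ Tuple.sort x, Tuple.monotone_sort x, ?_⟩
    rw [hx]
    exact (Equiv.prod_comp (Tuple.sort x) fun j => X - C (x j)).symm
  choose! r hrmono hr using hsel
  have hψρ : ∀ a : ↥S, phi n (r a.1) = a.1 := fun a => (eq_phi (hr a.1 a.2)).symm
  have hKc : IsClosed {x : Fin n → ℝ | Monotone x} := by
    have hK : {x : Fin n → ℝ | Monotone x} =
        ⋂ (p : Fin n × Fin n) (_ : p.1 ≤ p.2), {x : Fin n → ℝ | x p.1 ≤ x p.2} := by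
      ext x
      simp only [Set.mem_setOf_eq, Set.mem_iInter]
      exact ⟨fun h p hp => h hp, fun h a b hab => h (a, b) hab⟩
    rw [hK]
    exact isClosed_iInter fun p => isClosed_iInter fun _ =>
      isClosed_le (continuous_apply p.1) (continuous_apply p.2)
  have hcont : Continuous (fun a : ↥S => r a.1) := by
    rw [continuous_iff_isClosed]
    intro C hC
    have himg := isClosedMap_phi _ (hKc.inter hC)
    have hset : (fun a : ↥S => r a.1) ⁻¹' C =
        Subtype.val ⁻¹' (phi n '' ({x : Fin n → ℝ | Monotone x} ∩ C)) := by
      ext a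
      simp only [Set.mem_preimage, Set.mem_image, Set.mem_inter_iff, Set.mem_setOf_eq]
      constructor
      · intro h
        exact ⟨r a.1, ⟨hrmono a.1 a.2, h⟩, hψρ a⟩
      · rintro ⟨x, ⟨hxm, hxC⟩, hpx⟩
        rwa [phi_injOn x (r a.1) hxm (hrmono a.1 a.2) (hpx.trans (hψρ a).symm)] at hxC
    rw [hset]
    exact himg.preimage continuous_subtype_val
  refine ⟨fun a => if h : a ∈ S then r a else 0, ?_, ?_, ?_⟩
  · intro a ha
    simp only [dif_pos ha]
    exact hr a ha
  · intro a ha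
    simp only [dif_pos ha]
    exact hrmono a ha
  · intro i
    rw [continuousOn_iff_continuous_restrict]
    have heq : (S.domRestrict fun a => (if h : a ∈ S then r a else 0) i) =
        fun a : ↥S => r a.1 i := by
      funext a
      simp only [Set.domRestrict_apply, dif_pos a.2]
    rw [heq]
    exact (continuous_apply i).comp hcont
end

section
/- Let λ(t) be an eigenvalue function, differentiable in t, of a smooth curve A(t) of hermitian n×n complex matrices, and suppose at a point t there is an orthonormal basis situation where w(t) is a unit eigenvector of A(t) for λ(t) arising as a limit of eigenvectors for nearby parameters. Then λ'(t) = ⟨A'(t)w(t), w(t)⟩ for some unit eigenvector w(t) of A(t) with eigenvalue λ(t); in particular |λ'(t)| ≤ ‖A'(t)‖. -/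
open Matrix

/-- Feynman–Hellmann type formula: if `A(t)` is a smooth curve of hermitian
`n×n` complex matrices (with entrywise derivative `A'`) and `λ` is a
differentiable real eigenvalue function of `A`, then at each `t` there is a
unit eigenvector `w` of `A(t)` for `λ(t)` with `λ'(t) = ⟨A'(t)w, w⟩`; in
particular `|λ'(t)| ≤ ‖A'(t)‖` (operator norm on Euclidean space). -/
theorem eigenvalue_derivative_formula (n : ℕ)
    (A A' : ℝ → Matrix (Fin n) (Fin n) ℂ)
    (hA : ∀ i j, ContDiff ℝ (⊤ : ℕ∞) (fun t => A t i j))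
    (hA' : ∀ i j t, HasDerivAt (fun s => A s i j) (A' t i j) t)
    (hherm : ∀ t, (A t).IsHermitian)
    (l : ℝ → ℝ) (hl : Differentiable ℝ l)
    (heig : ∀ t, ∃ v : Fin n → ℂ, v ≠ 0 ∧ A t *ᵥ v = (Complex.ofReal (l t)) • v)
    (t : ℝ) :
    ∃ w : Fin n → ℂ,
      star w ⬝ᵥ w = 1 ∧
      A t *ᵥ w = (Complex.ofReal (l t)) • w ∧
      (Complex.ofReal (deriv l t)) = star w ⬝ᵥ (A' t *ᵥ w) ∧
      |deriv l t| ≤ ‖Matrix.toEuclideanCLM (𝕜 := ℂ) (A' t)‖ := by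
  classical
  -- unit eigenvectors exist at every parameter
  have hunit : ∀ τ : ℝ, ∃ u : EuclideanSpace ℂ (Fin n), ‖u‖ = 1 ∧
      A τ *ᵥ (WithLp.equiv 2 (Fin n → ℂ) u) =
        (Complex.ofReal (l τ)) • (WithLp.equiv 2 (Fin n → ℂ) u) := by
    intro τ
    obtain ⟨v, hv, hev⟩ := heig τ
    set v' : EuclideanSpace ℂ (Fin n) := (WithLp.equiv 2 (Fin n → ℂ)).symm v with hv'def
    have hv' : v' ≠ 0 := by
      intro h
      apply hv
      have := congrArg (WithLp.equiv 2 (Fin n → ℂ)) h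
      simpa [hv'def] using this
    refine ⟨(‖v'‖⁻¹ : ℂ) • v', norm_smul_inv_norm hv', ?_⟩
    have hev' : WithLp.equiv 2 (Fin n → ℂ) ((‖v'‖⁻¹ : ℂ) • v') = (‖v'‖⁻¹ : ℂ) • v := by
      simp [hv'def]
    rw [hev', Matrix.mulVec_smul, hev, smul_comm]
  choose u hu1 hu2 using hunit
  -- the sequence of parameters
  set s : ℕ → ℝ := fun k => t + ((k : ℝ) + 1)⁻¹ with hsdef
  have hskt : ∀ k, s k ≠ t := by
    intro k
    have : ((k : ℝ) + 1)⁻¹ ≠ 0 := by positivity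
    simp [hsdef, this]
  have hstend : Filter.Tendsto s Filter.atTop (nhds t) := by
    have h0 : Filter.Tendsto (fun k : ℕ => ((k : ℝ) + 1)⁻¹) Filter.atTop (nhds 0) := by
      simpa [one_div] using tendsto_one_div_add_atTop_nhds_zero_nat (𝕜 := ℝ)
    have := Filter.Tendsto.const_add t h0
    simpa [hsdef] using this
  -- compactness: extract a convergent subsequence of eigenvectors
  have hmem : ∀ k : ℕ, u (s k) ∈ Metric.sphere (0 : EuclideanSpace ℂ (Fin n)) 1 := by
    intro k
    simpa [mem_sphere_zero_iff_norm] using hu1 (s k)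
  obtain ⟨w, hwsph, φ, hφ, hwt⟩ :=
    (isCompact_sphere (0 : EuclideanSpace ℂ (Fin n)) 1).tendsto_subseq hmem
  have hwnorm : ‖w‖ = 1 := mem_sphere_zero_iff_norm.mp hwsph
  set σ : ℕ → ℝ := fun k => s (φ k) with hσdef
  have hσtend : Filter.Tendsto σ Filter.atTop (nhds t) := hstend.comp hφ.tendsto_atTop
  have hσne : ∀ k, σ k ≠ t := fun k => hskt (φ k)
  set W : Fin n → ℂ := WithLp.equiv 2 (Fin n → ℂ) w with hWdef
  set g : ℕ → Fin n → ℂ := fun k => WithLp.equiv 2 (Fin n → ℂ) (u (σ k)) with hgdef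
  -- coordinatewise convergence of the eigenvectors
  have hgW : ∀ j, Filter.Tendsto (fun k => g k j) Filter.atTop (nhds (W j)) := by
    intro j
    have hcont : Continuous fun x : EuclideanSpace ℂ (Fin n) =>
        (WithLp.equiv 2 (Fin n → ℂ) x) j :=
      (continuous_apply j).comp (PiLp.continuous_ofLp 2 (fun _ : Fin n => ℂ))
    exact (hcont.tendsto w).comp hwt
  -- eigen equation for each k
  have hgeig : ∀ k, A (σ k) *ᵥ g k = (Complex.ofReal (l (σ k))) • g k := fun k => hu2 (σ k)
  -- eigen equation in the limit
  have hweig : A t *ᵥ W = (Complex.ofReal (l t)) • W := by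
    funext i
    have h1 : Filter.Tendsto (fun k => (A (σ k) *ᵥ g k) i) Filter.atTop
        (nhds ((A t *ᵥ W) i)) := by
      simp only [Matrix.mulVec, dotProduct]
      exact tendsto_finset_sum _ fun j _ =>
        (((hA i j).continuous.tendsto t).comp hσtend).mul (hgW j)
    have h2 : Filter.Tendsto (fun k => (Complex.ofReal (l (σ k))) * g k i) Filter.atTop
        (nhds ((Complex.ofReal (l t)) * W i)) :=
      ((Complex.continuous_ofReal.tendsto _).comp
        ((hl.continuous.tendsto t).comp hσtend)).mul (hgW i)
    have heq : (fun k => (A (σ k) *ᵥ g k) i) = fun k => (Complex.ofReal (l (σ k))) * g k i := by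
      funext k
      rw [hgeig k]
      simp
    rw [heq] at h1
    have := tendsto_nhds_unique h1 h2
    simpa using this
  -- inner products
  set c : ℕ → ℂ := fun k => star W ⬝ᵥ g k with hcdef
  have hWW : star W ⬝ᵥ W = 1 := by
    have h1 : (inner ℂ w w : ℂ) = star W ⬝ᵥ W := by
      rw [EuclideanSpace.inner_eq_star_dotProduct, dotProduct_comm]; rfl
    have h2 : (inner ℂ w w : ℂ) = (‖w‖ : ℂ) ^ 2 := inner_self_eq_norm_sq_to_K w
    rw [← h1, h2, hwnorm]
    norm_num
  -- the hermitian transfer: star W ᵥ* A t = l t • star W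
  have hAtW : star W ᵥ* A t = (Complex.ofReal (l t)) • star W := by
    have h1 : star ((A t)ᴴ *ᵥ W) = star W ᵥ* ((A t)ᴴ)ᴴ := Matrix.star_mulVec _ _
    rw [conjTranspose_conjTranspose, (hherm t).eq, hweig] at h1
    rw [← h1, star_smul]
    simp
  -- the per-k identity
  have key : ∀ k, (Complex.ofReal ((l (σ k) - l t) / (σ k - t))) * c k =
      star W ⬝ᵥ ((((σ k - t : ℝ) : ℂ)⁻¹ • (A (σ k) - A t)) *ᵥ g k) := by
    intro k
    have hne : ((σ k - t : ℝ) : ℂ) ≠ 0 :=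
      Complex.ofReal_ne_zero.mpr (sub_ne_zero.mpr (hσne k))
    have e1 : star W ⬝ᵥ (A (σ k) *ᵥ g k) = (Complex.ofReal (l (σ k))) * c k := by
      rw [hgeig k, dotProduct_smul, smul_eq_mul, hcdef]
    have e2 : star W ⬝ᵥ (A t *ᵥ g k) = (Complex.ofReal (l t)) * c k := by
      rw [Matrix.dotProduct_mulVec, hAtW, smul_dotProduct, smul_eq_mul, hcdef]
    rw [Matrix.smul_mulVec, dotProduct_smul, Matrix.sub_mulVec,
      dotProduct_sub, e1, e2, smul_eq_mul]
    push_cast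
    field_simp
  -- limit of the left-hand side
  have hd : HasDerivAt l (deriv l t) t := (hl t).hasDerivAt
  have hσne' : Filter.Tendsto σ Filter.atTop (nhdsWithin t {t}ᶜ) := by
    refine tendsto_nhdsWithin_iff.mpr ⟨hσtend, Filter.Eventually.of_forall fun k => ?_⟩
    exact hσne k
  have hslopel : Filter.Tendsto (fun k => (l (σ k) - l t) / (σ k - t)) Filter.atTop
      (nhds (deriv l t)) := by
    have h1 := (hasDerivAt_iff_tendsto_slope.mp hd).comp hσne'
    have h2 : (fun k => slope l t (σ k)) = fun k => (l (σ k) - l t) / (σ k - t) := by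
      funext k
      rw [slope_def_field]
    rwa [Function.comp_def, h2] at h1
  have hLHS : Filter.Tendsto
      (fun k => (Complex.ofReal ((l (σ k) - l t) / (σ k - t))) * c k) Filter.atTop
      (nhds ((Complex.ofReal (deriv l t)) * 1)) := by
    refine Filter.Tendsto.mul ((Complex.continuous_ofReal.tendsto _).comp hslopel) ?_
    have : Filter.Tendsto c Filter.atTop (nhds (star W ⬝ᵥ W)) := by
      simp only [hcdef, dotProduct]
      exact tendsto_finset_sum _ fun i _ => Filter.Tendsto.const_mul _ (hgW i)
    rwa [hWW] at this
  -- limit of the right-hand side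
  have hBij : ∀ i j, Filter.Tendsto
      (fun k => ((((σ k - t : ℝ) : ℂ)⁻¹ • (A (σ k) - A t)) : Matrix (Fin n) (Fin n) ℂ) i j)
      Filter.atTop (nhds (A' t i j)) := by
    intro i j
    have h1 := (hasDerivAt_iff_tendsto_slope.mp (hA' i j t)).comp hσne'
    have h2 : ((fun x => slope (fun s => A s i j) t x) ∘ σ) =
        fun k => ((((σ k - t : ℝ) : ℂ)⁻¹ • (A (σ k) - A t)) : Matrix (Fin n) (Fin n) ℂ) i j := by
      funext k
      simp only [Function.comp_apply, slope_def_module, Matrix.smul_apply, Matrix.sub_apply,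
        smul_eq_mul]
      rw [← Complex.ofReal_inv, Complex.real_smul, Complex.ofReal_inv]
    rwa [h2] at h1
  have hRHS : Filter.Tendsto
      (fun k => star W ⬝ᵥ ((((σ k - t : ℝ) : ℂ)⁻¹ • (A (σ k) - A t)) *ᵥ g k)) Filter.atTop
      (nhds (star W ⬝ᵥ (A' t *ᵥ W))) := by
    simp only [Matrix.mulVec, dotProduct]
    exact tendsto_finset_sum _ fun i _ => Filter.Tendsto.const_mul _
      (tendsto_finset_sum _ fun j _ => (hBij i j).mul (hgW j))
  -- the Feynman–Hellmann formula
  have hformula : (Complex.ofReal (deriv l t)) = star W ⬝ᵥ (A' t *ᵥ W) := by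
    have h1 : Filter.Tendsto
        (fun k => (Complex.ofReal ((l (σ k) - l t) / (σ k - t))) * c k) Filter.atTop
        (nhds (star W ⬝ᵥ (A' t *ᵥ W))) := by
      simp only [key]
      exact hRHS
    have := tendsto_nhds_unique hLHS h1
    simpa using this
  -- the norm bound
  refine ⟨W, hWW, hweig, hformula, ?_⟩
  set T : EuclideanSpace ℂ (Fin n) →L[ℂ] EuclideanSpace ℂ (Fin n) :=
    Matrix.toEuclideanCLM (𝕜 := ℂ) (A' t) with hTdef
  have hinner : (inner ℂ w (T w) : ℂ) = star W ⬝ᵥ (A' t *ᵥ W) := by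
    rw [EuclideanSpace.inner_eq_star_dotProduct, dotProduct_comm]
    rfl
  calc |deriv l t| = ‖(Complex.ofReal (deriv l t))‖ := (Complex.norm_real _).symm
    _ = ‖(inner ℂ w (T w) : ℂ)‖ := by rw [hformula, ← hinner]
    _ ≤ ‖w‖ * ‖T w‖ := norm_inner_le_norm w (T w)
    _ ≤ ‖w‖ * (‖T‖ * ‖w‖) := by
        exact mul_le_mul_of_nonneg_left (T.le_opNorm w) (norm_nonneg w)
    _ = ‖T‖ := by rw [hwnorm]; ring
end

section
/- Define A(t) = e^{−1/t²}·[[cos(2/t), sin(2/t)], [sin(2/t), −cos(2/t)]] for t ≠ 0 and A(0) = 0. Then t ↦ A(t) is a smooth curve of real symmetric 2×2 matrices with smooth eigenvalues λ±(t) = ±e^{−1/t²}, but there is no continuous map t ↦ v(t) ∈ ℝ² \ {0} defined on a neighborhood of 0 with v(t) an eigenvector of A(t) for λ₊(t) for all t ≠ 0. -/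
open Filter Polynomial Complex Matrix

noncomputable def glA (P : Polynomial ℂ) (t : ℝ) : ℂ :=
  if t = 0 then 0 else P.eval ((t : ℂ)⁻¹) *
    Complex.exp (-((t:ℂ)⁻¹)^2 + 2*Complex.I*(t:ℂ)⁻¹)

lemma norm_exp_aux (r : ℝ) :
    ‖Complex.exp (-((r:ℂ))^2 + 2*Complex.I*(r:ℂ))‖ = Real.exp (-(r^2)) := by
  rw [Complex.norm_exp]
  congr 1
  simp [Complex.add_re, Complex.mul_re, ← Complex.ofReal_pow]

lemma pow_mul_exp_neg_sq (n : ℕ) :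
    Tendsto (fun x : ℝ => x ^ n * Real.exp (-(x^2))) atTop (nhds 0) := by
  have h := (Real.tendsto_pow_mul_exp_neg_atTop_nhds_zero n).comp
      (tendsto_pow_atTop (n := 2) two_ne_zero)
  apply squeeze_zero_norm' _ h
  filter_upwards [eventually_ge_atTop (1:ℝ)] with x hx
  have hx0 : (0:ℝ) ≤ x := le_trans zero_le_one hx
  have h1 : x ^ n ≤ (x^2) ^ n := by
    apply pow_le_pow_left₀ hx0
    nlinarith
  have h2 : ‖x ^ n * Real.exp (-(x^2))‖ = x ^ n * Real.exp (-(x^2)) := by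
    rw [Real.norm_eq_abs, _root_.abs_of_nonneg]
    positivity
  rw [h2]
  simp only [Function.comp]
  gcongr

lemma abs_inv_tendsto : Tendsto (fun t : ℝ => |t|⁻¹) (nhdsWithin 0 {0}ᶜ) atTop := by
  apply tendsto_inv_nhdsGT_zero.comp
  rw [tendsto_nhdsWithin_iff]
  refine ⟨(continuous_abs.tendsto' 0 0 abs_zero).mono_left nhdsWithin_le_nhds, ?_⟩
  filter_upwards [self_mem_nhdsWithin] with t ht
  exact abs_pos.mpr ht

lemma eval_bound (P : Polynomial ℂ) :
    ∃ C : ℝ, ∃ n : ℕ, 0 ≤ C ∧ ∀ r : ℝ, 1 ≤ |r| → ‖P.eval ((r:ℂ))‖ ≤ C * |r| ^ n := by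
  induction P using Polynomial.induction_on' with
  | monomial n a =>
    refine ⟨‖a‖, n, norm_nonneg a, fun r hr => ?_⟩
    simp [Polynomial.eval_monomial, norm_mul, norm_pow, Complex.norm_real]
  | add p q hp hq =>
    obtain ⟨C₁, n₁, hC₁, h₁⟩ := hp
    obtain ⟨C₂, n₂, hC₂, h₂⟩ := hq
    refine ⟨C₁ + C₂, max n₁ n₂, by positivity, fun r hr => ?_⟩
    have e1 : |r| ^ n₁ ≤ |r| ^ (max n₁ n₂) := pow_le_pow_right₀ hr (le_max_left _ _)
    have e2 : |r| ^ n₂ ≤ |r| ^ (max n₁ n₂) := pow_le_pow_right₀ hr (le_max_right _ _)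
    calc ‖(p+q).eval ((r:ℂ))‖ ≤ ‖p.eval ((r:ℂ))‖ + ‖q.eval ((r:ℂ))‖ := by
            rw [Polynomial.eval_add]; exact norm_add_le _ _
      _ ≤ C₁ * |r| ^ n₁ + C₂ * |r| ^ n₂ := add_le_add (h₁ r hr) (h₂ r hr)
      _ ≤ C₁ * |r| ^ (max n₁ n₂) + C₂ * |r| ^ (max n₁ n₂) := by gcongr
      _ = (C₁ + C₂) * |r| ^ (max n₁ n₂) := by ring

lemma glA_norm (P : Polynomial ℂ) {t : ℝ} (ht : t ≠ 0) :
    ‖glA P t‖ = ‖P.eval ((t:ℂ)⁻¹)‖ * Real.exp (-(t⁻¹ ^ 2)) := by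
  rw [glA, if_neg ht, norm_mul]
  congr 1
  rw [← Complex.ofReal_inv]
  exact norm_exp_aux t⁻¹

lemma glA_tendsto (P : Polynomial ℂ) : Tendsto (glA P) (nhds 0) (nhds 0) := by
  rw [← nhdsNE_sup_pure (0:ℝ), tendsto_sup]
  constructor
  · obtain ⟨C, n, hC, hb⟩ := eval_bound P
    have hcomp : Tendsto (fun t : ℝ => C * ((|t|⁻¹) ^ n * Real.exp (-((|t|⁻¹)^2))))
        (nhdsWithin 0 {0}ᶜ) (nhds 0) := by
      have := ((pow_mul_exp_neg_sq n).const_mul C).comp abs_inv_tendsto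
      simpa only [Function.comp_def, mul_zero] using this
    apply squeeze_zero_norm' _ hcomp
    have hev : ∀ᶠ t : ℝ in nhdsWithin 0 {0}ᶜ, |t| ≤ 1 ∧ t ≠ 0 := by
      apply Filter.Eventually.and
      · exact Filter.Eventually.filter_mono nhdsWithin_le_nhds
          (by simpa using eventually_abs_sub_lt (0:ℝ) one_pos |>.mono fun x hx => le_of_lt (by simpa using hx))
      · filter_upwards [self_mem_nhdsWithin] with t ht using ht
    filter_upwards [hev] with t ⟨ht1, ht0⟩
    rw [glA_norm P ht0]
    have h1 : (1:ℝ) ≤ |t⁻¹| := by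
      rw [abs_inv]
      rw [le_inv_comm₀] <;> simp [abs_pos.mpr ht0, ht1]
    have := hb t⁻¹ h1
    rw [← Complex.ofReal_inv]
    calc ‖P.eval ((t⁻¹:ℝ):ℂ)‖ * Real.exp (-(t⁻¹ ^ 2))
        ≤ (C * |t⁻¹| ^ n) * Real.exp (-(t⁻¹ ^ 2)) := by gcongr
      _ = C * ((|t|⁻¹) ^ n * Real.exp (-((|t|⁻¹)^2))) := by
          have habs : (|t|⁻¹)^2 = t⁻¹^2 := by
            rw [inv_pow, inv_pow, _root_.sq_abs]
          rw [abs_inv, habs]; ring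
  · have h0 : glA P 0 = 0 := if_pos rfl
    simpa [h0] using (tendsto_pure_nhds (glA P) 0)

noncomputable def Pd (P : Polynomial ℂ) : Polynomial ℂ :=
  -X^2 * (derivative P + P * (Polynomial.C (2*Complex.I) - 2*X))

lemma glA_hasDerivAt (P : Polynomial ℂ) (t : ℝ) :
    HasDerivAt (glA P) (glA (Pd P) t) t := by
  rcases eq_or_ne t 0 with rfl | ht
  · rw [show glA (Pd P) 0 = 0 from if_pos rfl, hasDerivAt_iff_tendsto_slope]
    have hXP : Tendsto (glA (X*P)) (nhdsWithin 0 {(0:ℝ)}ᶜ) (nhds 0) :=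
      (glA_tendsto (X * P)).mono_left nhdsWithin_le_nhds
    apply hXP.congr'
    filter_upwards [self_mem_nhdsWithin] with s hs
    have hs' : (s:ℝ) ≠ 0 := hs
    rw [slope_def_module]
    simp only [glA]
    rw [if_neg hs', if_neg hs']
    simp only [if_true]
    rw [Polynomial.eval_mul, Polynomial.eval_X]
    rw [sub_zero, sub_zero, Complex.real_smul]
    push_cast
    ring
  · -- t ≠ 0 : explicit formula near t
    have h0 : (fun s : ℝ => P.eval ((s:ℂ)⁻¹) *
        Complex.exp (-((s:ℂ)⁻¹)^2 + 2*Complex.I*(s:ℂ)⁻¹)) =ᶠ[nhds t] glA P := by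
      filter_upwards [isOpen_compl_singleton.mem_nhds ht] with s hs
      exact (if_neg hs).symm
    apply HasDerivAt.congr_of_eventuallyEq ?_ h0.symm
    set F : ℂ → ℂ := fun z => P.eval z * Complex.exp (-z^2 + 2*Complex.I*z) with hF
    have hder : ∀ z : ℂ, HasDerivAt F
        ((P.derivative.eval z + P.eval z * (2*Complex.I - 2*z)) *
          Complex.exp (-z^2 + 2*Complex.I*z)) z := by
      intro z
      have h2 : HasDerivAt (fun z : ℂ => -z^2 + 2*Complex.I*z) (-(2*z) + 2*Complex.I) z := by
        have := ((hasDerivAt_pow 2 z).neg.add ((hasDerivAt_id z).const_mul (2*Complex.I)))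
        refine this.congr_deriv ?_
        norm_num
      have := (P.hasDerivAt z).mul h2.cexp
      refine this.congr_deriv ?_
      ring
    have hinner : HasDerivAt (fun s : ℝ => s⁻¹) (-(t^2)⁻¹) t := by
      simpa using hasDerivAt_inv ht
    have houter : HasDerivAt (fun r : ℝ => F (r:ℂ))
        ((P.derivative.eval ((t⁻¹:ℝ):ℂ) + P.eval ((t⁻¹:ℝ):ℂ) * (2*Complex.I - 2*((t⁻¹:ℝ):ℂ))) *
          Complex.exp (-((t⁻¹:ℝ):ℂ)^2 + 2*Complex.I*((t⁻¹:ℝ):ℂ))) (t⁻¹) :=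
      (hder _).comp_ofReal
    have hcomp := HasDerivAt.scomp t houter hinner
    have heq : (fun s : ℝ => P.eval ((s:ℂ)⁻¹) *
        Complex.exp (-((s:ℂ)⁻¹)^2 + 2*Complex.I*(s:ℂ)⁻¹)) =
        ((fun r : ℝ => F (r:ℂ)) ∘ fun s : ℝ => s⁻¹) := by
      funext s
      simp only [Function.comp, hF, Complex.ofReal_inv]
    rw [heq]
    convert hcomp using 1
    rw [glA, if_neg ht, Pd]
    simp only [Polynomial.eval_mul, Polynomial.eval_add, Polynomial.eval_neg,
      Polynomial.eval_pow, Polynomial.eval_X, Polynomial.eval_sub, Polynomial.eval_C,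
      Polynomial.eval_mul, Polynomial.eval_ofNat, Complex.real_smul]
    push_cast
    ring

lemma glA_deriv (P : Polynomial ℂ) : deriv (glA P) = glA (Pd P) :=
  funext fun t => (glA_hasDerivAt P t).deriv

lemma glA_contDiff (P : Polynomial ℂ) : ContDiff ℝ ((⊤:ℕ∞) : WithTop ℕ∞) (glA P) := by
  rw [contDiff_infty]
  intro n
  induction n generalizing P with
  | zero =>
    refine contDiff_zero.mpr (continuous_iff_continuousAt.mpr fun t => ?_)
    exact (glA_hasDerivAt P t).continuousAt
  | succ n ih =>
    have hcast : ((n+1 : ℕ) : WithTop ℕ∞) = (n : WithTop ℕ∞) + 1 := by push_cast; rfl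
    rw [hcast, contDiff_succ_iff_deriv]
    refine ⟨fun t => (glA_hasDerivAt P t).differentiableAt, ?_, ?_⟩
    · intro h
      exact absurd h (by simp)
    · rw [glA_deriv]
      exact ih (Pd P)

lemma glA_one_re {t : ℝ} (ht : t ≠ 0) :
    (glA 1 t).re = Real.exp (-1/t^2) * Real.cos (2/t) := by
  rw [glA, if_neg ht, Polynomial.eval_one, one_mul]
  have hz : -((t:ℂ)⁻¹)^2 + 2*Complex.I*(t:ℂ)⁻¹
      = Complex.ofReal (-1/t^2) + Complex.ofReal (2/t) * Complex.I := by
    push_cast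
    field_simp
  rw [hz, Complex.exp_re]
  simp only [Complex.add_re, Complex.add_im, Complex.ofReal_re, Complex.ofReal_im,
    Complex.mul_re, Complex.mul_im, Complex.I_re, Complex.I_im, mul_zero, mul_one,
    zero_mul, sub_zero, zero_sub, add_zero, zero_add, neg_zero]

lemma glA_one_im {t : ℝ} (ht : t ≠ 0) :
    (glA 1 t).im = Real.exp (-1/t^2) * Real.sin (2/t) := by
  rw [glA, if_neg ht, Polynomial.eval_one, one_mul]
  have hz : -((t:ℂ)⁻¹)^2 + 2*Complex.I*(t:ℂ)⁻¹
      = Complex.ofReal (-1/t^2) + Complex.ofReal (2/t) * Complex.I := by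
    push_cast
    field_simp
  rw [hz, Complex.exp_im]
  simp only [Complex.add_re, Complex.add_im, Complex.ofReal_re, Complex.ofReal_im,
    Complex.mul_re, Complex.mul_im, Complex.I_re, Complex.I_im, mul_zero, mul_one,
    zero_mul, sub_zero, zero_sub, add_zero, zero_add, neg_zero]

/-- Example 7.7: `A(t) = e^{-1/t²}·[[cos(2/t), sin(2/t)], [sin(2/t), −cos(2/t)]]`
for `t ≠ 0`, `A(0) = 0`, is a smooth curve of symmetric `2×2` real matrices with
smooth eigenvalues `±e^{-1/t²}` (extended by `0` at `t = 0`), but there is no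
continuous nonvanishing eigenvector field for the eigenvalue `λ₊` near `0`. -/
theorem no_continuous_eigenvectors :
    ∀ A : ℝ → Matrix (Fin 2) (Fin 2) ℝ,
    (∀ t : ℝ, t ≠ 0 → A t = Real.exp (-1 / t ^ 2) •
        !![Real.cos (2 / t), Real.sin (2 / t); Real.sin (2 / t), -Real.cos (2 / t)]) →
    A 0 = 0 →
    (∀ i j, ContDiff ℝ (⊤ : ℕ∞) (fun t => A t i j)) ∧
    (∀ t, (A t).IsSymm) ∧
    ContDiff ℝ (⊤ : ℕ∞) (fun t : ℝ => if t = 0 then 0 else Real.exp (-1 / t ^ 2)) ∧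
    (∀ t : ℝ, ∃ v : Fin 2 → ℝ, v ≠ 0 ∧
      A t *ᵥ v = (if t = 0 then 0 else Real.exp (-1 / t ^ 2)) • v) ∧
    ¬ ∃ (v : ℝ → Fin 2 → ℝ) (U : Set ℝ), U ∈ nhds 0 ∧ ContinuousOn v U ∧
        (∀ t ∈ U, v t ≠ 0) ∧
        ∀ t ∈ U, t ≠ 0 →
          A t *ᵥ v t = Real.exp (-1 / t ^ 2) • v t := by
  intro A hA hA0
  have hre : ContDiff ℝ (⊤:ℕ∞) fun t => (glA 1 t).re :=
    (Complex.reCLM.contDiff).comp (glA_contDiff 1)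
  have him : ContDiff ℝ (⊤:ℕ∞) fun t => (glA 1 t).im :=
    (Complex.imCLM.contDiff).comp (glA_contDiff 1)
  refine ⟨?_, ?_, ?_, ?_, ?_⟩
  · -- smoothness of entries
    intro i j
    fin_cases i <;> fin_cases j
    · show ContDiff ℝ (⊤:ℕ∞) fun t => A t 0 0
      have h : (fun t => A t 0 0) = fun t => (glA 1 t).re := by
        funext t
        rcases eq_or_ne t 0 with rfl | ht
        · rw [hA0]; simp [glA]
        · rw [hA t ht, glA_one_re ht]; simp [Matrix.smul_apply]
      rw [h]; exact hre
    · show ContDiff ℝ (⊤:ℕ∞) fun t => A t 0 1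
      have h : (fun t => A t 0 1) = fun t => (glA 1 t).im := by
        funext t
        rcases eq_or_ne t 0 with rfl | ht
        · rw [hA0]; simp [glA]
        · rw [hA t ht, glA_one_im ht]; simp [Matrix.smul_apply]
      rw [h]; exact him
    · show ContDiff ℝ (⊤:ℕ∞) fun t => A t 1 0
      have h : (fun t => A t 1 0) = fun t => (glA 1 t).im := by
        funext t
        rcases eq_or_ne t 0 with rfl | ht
        · rw [hA0]; simp [glA]
        · rw [hA t ht, glA_one_im ht]; simp [Matrix.smul_apply]
      rw [h]; exact him
    · show ContDiff ℝ (⊤:ℕ∞) fun t => A t 1 1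
      have h : (fun t => A t 1 1) = fun t => -(glA 1 t).re := by
        funext t
        rcases eq_or_ne t 0 with rfl | ht
        · rw [hA0]; simp [glA]
        · rw [hA t ht, glA_one_re ht]; simp [Matrix.smul_apply]
      rw [h]; exact hre.neg
  · -- symmetry
    intro t
    rcases eq_or_ne t 0 with rfl | ht
    · rw [hA0]; simp [Matrix.IsSymm]
    · rw [hA t ht, Matrix.IsSymm]
      ext i j
      fin_cases i <;> fin_cases j <;> simp [Matrix.smul_apply]
  · -- smooth eigenvalue
    have h : (fun t : ℝ => if t = 0 then 0 else Real.exp (-1 / t ^ 2))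
        = fun t : ℝ => expNegInvGlue (t^2) := by
      funext t
      rcases eq_or_ne t 0 with rfl | ht
      · simp [expNegInvGlue]
      · rw [if_neg ht, expNegInvGlue]
        rw [if_neg (not_le.mpr (by positivity))]
        congr 1
        field_simp
    rw [h]
    exact expNegInvGlue.contDiff.comp (contDiff_id.pow 2)
  · -- eigenvectors exist pointwise
    intro t
    rcases eq_or_ne t 0 with rfl | ht
    · refine ⟨![1, 0], ?_, ?_⟩
      · intro h
        have := congrFun h 0
        norm_num at this
      · rw [hA0, if_pos rfl]
        simp
    · refine ⟨![Real.cos (1/t), Real.sin (1/t)], ?_, ?_⟩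
      · intro h
        have h0 := congrFun h 0
        have h1 := congrFun h 1
        simp at h0 h1
        have hsc := Real.sin_sq_add_cos_sq t⁻¹
        rw [h0, h1] at hsc
        norm_num at hsc
      · rw [if_neg ht, hA t ht, Matrix.smul_mulVec]
        congr 1
        have h2t : 2/t = 1/t + 1/t := by ring
        funext i
        fin_cases i
        · simp [Matrix.mulVec, dotProduct, Fin.sum_univ_two, h2t,
            Real.cos_add, Real.sin_add]
          linear_combination Real.cos t⁻¹ * Real.sin_sq_add_cos_sq t⁻¹
        · simp [Matrix.mulVec, dotProduct, Fin.sum_univ_two, h2t,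
            Real.cos_add, Real.sin_add]
          linear_combination Real.sin t⁻¹ * Real.sin_sq_add_cos_sq t⁻¹
  · -- no continuous eigenvector field
    rintro ⟨v, U, hU, hvc, hvne, hev⟩
    have hv0 : ContinuousAt v 0 := hvc.continuousAt hU
    -- component equations at special times
    have hkey : ∀ t ∈ U, t ≠ 0 → Real.sin (2/t) = 0 →
        (Real.cos (2/t) = 1 → v t 1 = 0) ∧ (Real.cos (2/t) = -1 → v t 0 = 0) := by
      intro t htU ht hsin
      have heq := hev t htU ht
      have he : Real.exp (-1 / t ^ 2) ≠ 0 := Real.exp_ne_zero _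
      rw [hA t ht, Matrix.smul_mulVec] at heq
      have h0 := congrFun heq 0
      have h1 := congrFun heq 1
      constructor
      · intro hcos
        simp [Matrix.mulVec, dotProduct, Fin.sum_univ_two, hsin, hcos] at h1
        have hy : Real.exp (-1 / t ^ 2) * v t 1 = 0 := by linarith
        exact (mul_eq_zero.mp hy).resolve_left he
      · intro hcos
        simp [Matrix.mulVec, dotProduct, Fin.sum_univ_two, hsin, hcos] at h0
        have hx : Real.exp (-1 / t ^ 2) * v t 0 = 0 := by linarith
        exact (mul_eq_zero.mp hx).resolve_left he
    set a : ℕ → ℝ := fun k => 1/(Real.pi * (k+1)) with ha_def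
    set b : ℕ → ℝ := fun k => 2/(Real.pi * (2*k+1)) with hb_def
    have hpi := Real.pi_pos
    have hane : ∀ k, a k ≠ 0 := by
      intro k; simp only [ha_def]; positivity
    have hbne : ∀ k, b k ≠ 0 := by
      intro k; simp only [hb_def]; positivity
    have hinner1 : Tendsto (fun k : ℕ => Real.pi * ((k:ℝ)+1)) atTop atTop := by
      apply Tendsto.const_mul_atTop hpi
      exact tendsto_atTop_add_const_right _ 1 (tendsto_natCast_atTop_atTop (R := ℝ))
    have hinner2 : Tendsto (fun k : ℕ => Real.pi * (2*(k:ℝ)+1)) atTop atTop := by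
      apply Tendsto.const_mul_atTop hpi
      apply tendsto_atTop_add_const_right
      exact (tendsto_natCast_atTop_atTop (R := ℝ)).const_mul_atTop two_pos
    have ha : Tendsto a atTop (nhds 0) := by
      have h := tendsto_inv_atTop_zero.comp hinner1
      simp only [ha_def, one_div]
      exact h
    have hb : Tendsto b atTop (nhds 0) := by
      have h := (tendsto_inv_atTop_zero.comp hinner2).const_mul (2:ℝ)
      simp only [hb_def, div_eq_mul_inv]
      simpa using h
    have haU : ∀ᶠ k in atTop, a k ∈ U := ha.eventually_mem hU
    have hbU : ∀ᶠ k in atTop, b k ∈ U := hb.eventually_mem hU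
    -- trig values
    have hatrig : ∀ k : ℕ, Real.sin (2/(a k)) = 0 ∧ Real.cos (2/(a k)) = 1 := by
      intro k
      have h2a : 2/(a k) = ((k:ℝ)+1) * (2*Real.pi) := by
        rw [ha_def]
        field_simp
      constructor
      · rw [h2a, show ((k:ℝ)+1) * (2*Real.pi) = ((2*(k+1) : ℕ) : ℝ) * Real.pi by push_cast; ring]
        exact Real.sin_nat_mul_pi _
      · rw [h2a, show ((k:ℝ)+1) * (2*Real.pi) = ((k+1 : ℕ) : ℝ) * (2*Real.pi) by push_cast; ring]
        exact Real.cos_nat_mul_two_pi _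
    have hbtrig : ∀ k : ℕ, Real.sin (2/(b k)) = 0 ∧ Real.cos (2/(b k)) = -1 := by
      intro k
      have h2b : 2/(b k) = Real.pi * (2*(k:ℝ)+1) := by
        rw [hb_def]
        field_simp
      constructor
      · rw [h2b, show Real.pi * (2*(k:ℝ)+1) = ((2*k+1 : ℕ) : ℝ) * Real.pi by push_cast; ring]
        exact Real.sin_nat_mul_pi _
      · rw [h2b, show Real.pi * (2*(k:ℝ)+1) = ((k:ℕ) : ℝ) * (2*Real.pi) + Real.pi by push_cast; ring]
        exact Real.cos_nat_mul_two_pi_add_pi _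
    have hva : ∀ᶠ k in atTop, v (a k) 1 = 0 := by
      filter_upwards [haU] with k hk
      exact (hkey (a k) hk (hane k) (hatrig k).1).1 (hatrig k).2
    have hvb : ∀ᶠ k in atTop, v (b k) 0 = 0 := by
      filter_upwards [hbU] with k hk
      exact (hkey (b k) hk (hbne k) (hbtrig k).1).2 (hbtrig k).2
    have hlim1 : Tendsto (fun k => v (a k) 1) atTop (nhds (v 0 1)) :=
      ((continuous_apply (1 : Fin 2)).continuousAt.tendsto.comp (hv0.tendsto.comp ha))
    have hlim0 : Tendsto (fun k => v (b k) 0) atTop (nhds (v 0 0)) :=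
      ((continuous_apply (0 : Fin 2)).continuousAt.tendsto.comp (hv0.tendsto.comp hb))
    have hz1 : v 0 1 = 0 :=
      tendsto_nhds_unique hlim1 (tendsto_const_nhds.congr' (hva.mono fun k h => h.symm))
    have hz0 : v 0 0 = 0 :=
      tendsto_nhds_unique hlim0 (tendsto_const_nhds.congr' (hvb.mono fun k h => h.symm))
    apply hvne 0 (mem_of_mem_nhds hU)
    funext i
    fin_cases i
    · exact hz0
    · exact hz1
end
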